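/- arXiv:2312.05382 — 2 statements merged into one kernel-verified Lean document; each statement's English description precedes it below -/
import Mathlib

section
/- Let N, n be positive integers with N ≤ n, let d be a natural number with d + 1 ≤ N, let T > 0 and t₀ ∈ ℝ with 0 ≤ t₀ and t₀ + NT/n ≤ T. In the filter setting, suppose y : ℝ → ℝ is (d+1)-times differentiable on [t₀, t₀ + NT/n] with |y^{(d+1)}(t)| ≤ M for all t in that interval, and suppose the random observations satisfy E z_j = y(t₀ + jT/n) for j = 1, …, N. Then the derivative estimator x̂ = C Σ_{j=1}^N ρ_j p(j/N) z_j with C = d! n^d / (N^{d+1} T^d h) satisfies |E x̂ − y^{(d)}(t₀)| ≤ (M T/(d+1)) · (N/n) · (g/|h|). -/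
open MeasureTheory ProbabilityTheory Real Finset

private lemma setEq_nhds {s t u : Set ℝ} {x : ℝ} (hu : IsOpen u) (hx : x ∈ u)
    (h : s ∩ u = t ∩ u) : s =ᶠ[nhds x] t := by
  filter_upwards [hu.mem_nhds hx] with y hy
  have h1 := Set.ext_iff.mp h y
  simp only [Set.mem_inter_iff, hy, and_true] at h1
  exact propext h1

private lemma iDW_congr_set {f : ℝ → ℝ} {s t : Set ℝ} {x : ℝ} (h : s =ᶠ[nhds x] t) (k : ℕ) :
    iteratedDerivWithin k f s x = iteratedDerivWithin k f t x := by
  simp only [iteratedDerivWithin]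
  rw [iteratedFDerivWithin_congr_set h]

private lemma taylor_bound' {f : ℝ → ℝ} {a b M : ℝ} {d : ℕ}
    (hf : ∀ k ≤ d, ∀ t ∈ Set.Icc a b,
      DifferentiableWithinAt ℝ (iteratedDerivWithin k f (Set.Icc a b)) (Set.Icc a b) t)
    (hM : ∀ t ∈ Set.Icc a b, |iteratedDerivWithin (d + 1) f (Set.Icc a b) t| ≤ M)
    {x : ℝ} (hx : x ∈ Set.Ioc a b) :
    |f x - taylorWithinEval f d (Set.Icc a b) a x| ≤
      M * (x - a) ^ (d + 1) / (d + 1).factorial := by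
  obtain ⟨hax, hxb⟩ := hx
  have hsub : Set.Icc a x ⊆ Set.Icc a b := Set.Icc_subset_Icc_right hxb
  have hIoo : Set.Ioo a x ⊆ Set.Icc a b := Set.Ioo_subset_Icc_self.trans hsub
  have hcd : ContDiffOn ℝ d f (Set.Icc a b) := by
    apply contDiffOn_of_differentiableOn_deriv
    intro m hm
    exact fun t ht => hf m (by exact_mod_cast hm) t ht
  have hEq : ∀ u ∈ Set.Ioo a x, Set.Icc a x =ᶠ[nhds u] Set.Icc a b := by
    intro u hu
    refine setEq_nhds isOpen_Ioo hu ?_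
    rw [Set.inter_eq_self_of_subset_right Set.Ioo_subset_Icc_self,
      Set.inter_eq_self_of_subset_right hIoo]
  have hEqa : Set.Icc a x =ᶠ[nhds a] Set.Icc a b := by
    refine setEq_nhds isOpen_Iio (Set.mem_Iio.mpr hax) ?_
    ext u
    simp only [Set.mem_inter_iff, Set.mem_Icc, Set.mem_Iio]
    constructor <;> rintro ⟨⟨h1, h2⟩, h3⟩ <;> exact ⟨⟨h1, by linarith⟩, h3⟩
  have hf' : DifferentiableOn ℝ (iteratedDerivWithin d f (Set.Icc a x)) (Set.Ioo a x) := by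
    intro u hu
    have h1 := (hf d le_rfl u (hIoo hu)).mono hIoo
    exact h1.congr (fun v hv => iDW_congr_set (hEq v hv) d) (iDW_congr_set (hEq u hu) d)
  obtain ⟨x', hx', hx'eq⟩ := taylor_mean_remainder_lagrange hax.ne
    (by rw [Set.uIcc_of_le hax.le]; exact hcd.mono hsub)
    (by rw [Set.uIcc_of_le hax.le, Set.uIoo_of_le hax.le]; exact hf')
  rw [Set.uIoo_of_le hax.le] at hx'
  rw [Set.uIcc_of_le hax.le] at hx'eq
  have htay : taylorWithinEval f d (Set.Icc a x) a x = taylorWithinEval f d (Set.Icc a b) a x := by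
    rw [taylor_within_apply, taylor_within_apply]
    exact Finset.sum_congr rfl fun k _ => by rw [iDW_congr_set hEqa k]
  have hx'mem : x' ∈ Set.Icc a b := ⟨hx'.1.le, hx'.2.le.trans hxb⟩
  have hD := hM x' hx'mem
  rw [← htay, hx'eq, iDW_congr_set (hEq x' hx') (d + 1), abs_div, abs_mul]
  rw [abs_of_nonneg (pow_nonneg (by linarith [hx'.1, hax] : (0:ℝ) ≤ x - a) _),
    abs_of_nonneg (by positivity : (0:ℝ) ≤ ((d+1).factorial : ℝ))]
  rw [div_le_div_iff_of_pos_right (by positivity : (0:ℝ) < ((d+1).factorial : ℝ))]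
  exact mul_le_mul_of_nonneg_right hD
    (pow_nonneg (by linarith [hx'.1] : (0:ℝ) ≤ x - a) _)

/-- Bias of the estimated derivative (Lemma: diff-bias). -/
theorem bias_of_estimated_derivative
    {Ω : Type*} [MeasurableSpace Ω] (μ : Measure Ω) [IsProbabilityMeasure μ]
    (N n : ℕ) (hN : 0 < N) (hNn : N ≤ n)
    (d : ℕ) (hd : d + 1 ≤ N)
    (T : ℝ) (hT : 0 < T) (t₀ : ℝ) (ht₀ : 0 ≤ t₀) (ht₁ : t₀ + N * T / n ≤ T)
    -- filter setting
    (ρ : ℕ → ℝ) (hρ : ∀ j ∈ Finset.Icc 1 N, 0 < ρ j)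
    (p : Polynomial ℝ) (hp : p.degree = d)
    (horth : ∀ k < d,
      (1 / N : ℝ) * ∑ j ∈ Finset.Icc 1 N,
        ρ j * p.eval ((j : ℝ) / N) * ((j : ℝ) / N) ^ k = 0)
    (H G : ℝ)
    (hH : H = (1 / N : ℝ) * ∑ j ∈ Finset.Icc 1 N,
        ρ j * p.eval ((j : ℝ) / N) * ((j : ℝ) / N) ^ d)
    (hHne : H ≠ 0)
    (hG : G = (1 / N : ℝ) * ∑ j ∈ Finset.Icc 1 N, ρ j * |p.eval ((j : ℝ) / N)|)
    -- regularity of y on the window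
    (y : ℝ → ℝ) (M : ℝ)
    (hy : ∀ k ≤ d, ∀ t ∈ Set.Icc t₀ (t₀ + N * T / n),
      DifferentiableWithinAt ℝ
        (iteratedDerivWithin k y (Set.Icc t₀ (t₀ + N * T / n)))
        (Set.Icc t₀ (t₀ + N * T / n)) t)
    (hM : ∀ t ∈ Set.Icc t₀ (t₀ + N * T / n),
      |iteratedDerivWithin (d + 1) y (Set.Icc t₀ (t₀ + N * T / n)) t| ≤ M)
    -- observations
    (z : ℕ → Ω → ℝ) (hzint : ∀ j ∈ Finset.Icc 1 N, Integrable (z j) μ)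
    (hzmean : ∀ j ∈ Finset.Icc 1 N, ∫ ω, z j ω ∂μ = y (t₀ + j * T / n))
    -- the estimator
    (C : ℝ) (hC : C = (d.factorial : ℝ) * n ^ d / (N ^ (d + 1) * T ^ d * H))
    (xhat : Ω → ℝ)
    (hxhat : xhat = fun ω => C * ∑ j ∈ Finset.Icc 1 N, ρ j * p.eval ((j : ℝ) / N) * z j ω) :
    |(∫ ω, xhat ω ∂μ) - iteratedDerivWithin d y (Set.Icc t₀ (t₀ + N * T / n)) t₀|
      ≤ (M * T / (d + 1)) * ((N : ℝ) / n) * (G / |H|) := by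
  have hn : 0 < n := hN.trans_le hNn
  have hnR : (0:ℝ) < n := by exact_mod_cast hn
  have hNR : (0:ℝ) < N := by exact_mod_cast hN
  have hnne : (n:ℝ) ≠ 0 := hnR.ne'
  have hNne : (N:ℝ) ≠ 0 := hNR.ne'
  have hTne : T ≠ 0 := hT.ne'
  have hfacne : (d.factorial : ℝ) ≠ 0 := by positivity
  have hwid : (0:ℝ) < (N:ℝ) * T / n := by positivity
  have hab : t₀ < t₀ + (N:ℝ) * T / n := by linarith
  have hMnn : 0 ≤ M := le_trans (abs_nonneg _) (hM t₀ ⟨le_refl _, hab.le⟩)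
  set R : ℕ → ℝ := fun j => y (t₀ + (j:ℝ) * T / n)
      - taylorWithinEval y d (Set.Icc t₀ (t₀ + (N:ℝ) * T / n)) t₀ (t₀ + (j:ℝ) * T / n)
    with hRdef
  -- nodes lie in the window
  have hnode : ∀ j ∈ Finset.Icc 1 N, t₀ + (j:ℝ) * T / n ∈ Set.Ioc t₀ (t₀ + (N:ℝ) * T / n) := by
    intro j hj
    obtain ⟨hj1, hjN⟩ := Finset.mem_Icc.mp hj
    have hj1R : (1:ℝ) ≤ j := by exact_mod_cast hj1
    have hjNR : (j:ℝ) ≤ N := by exact_mod_cast hjN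
    have h1 : (0:ℝ) < (j:ℝ) * T / n := by positivity
    have h2 : (j:ℝ) * T / n ≤ (N:ℝ) * T / n := by gcongr
    exact ⟨by linarith, by linarith⟩
  -- remainder bound
  have hB : ∀ j ∈ Finset.Icc 1 N,
      |R j| ≤ M * ((N:ℝ) * T / n) ^ (d+1) / (d+1).factorial := by
    intro j hj
    have h1 := taylor_bound' hy hM (hnode j hj)
    have h2 : (t₀ + (j:ℝ) * T / n) - t₀ = (j:ℝ) * T / n := by ring
    rw [h2] at h1
    refine le_trans h1 ?_
    have hjNR : (j:ℝ) ≤ N := by exact_mod_cast (Finset.mem_Icc.mp hj).2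
    have h3 : ((j:ℝ) * T / n) ^ (d+1) ≤ ((N:ℝ) * T / n) ^ (d+1) := by
      gcongr
    gcongr
  -- expected value of the estimator
  have hEx : ∫ ω, xhat ω ∂μ
      = C * ∑ j ∈ Finset.Icc 1 N, ρ j * p.eval ((j:ℝ)/N) * y (t₀ + (j:ℝ) * T / n) := by
    rw [hxhat]
    rw [integral_const_mul]
    congr 1
    rw [integral_finset_sum _ (fun j hj => (hzint j hj).const_mul _)]
    exact Finset.sum_congr rfl fun j hj => by rw [integral_const_mul, hzmean j hj]
  -- moment sums
  have hS0 : ∀ k < d, ∑ j ∈ Finset.Icc 1 N, ρ j * p.eval ((j:ℝ)/N) * ((j:ℝ)/N) ^ k = 0 :=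
    fun k hk => (mul_eq_zero.mp (horth k hk)).resolve_left (by positivity)
  have hSd : ∑ j ∈ Finset.Icc 1 N, ρ j * p.eval ((j:ℝ)/N) * ((j:ℝ)/N) ^ d = (N:ℝ) * H := by
    rw [hH]
    field_simp
  -- main sum decomposition
  have hsum : ∑ j ∈ Finset.Icc 1 N, ρ j * p.eval ((j:ℝ)/N) * y (t₀ + (j:ℝ) * T / n)
      = (d.factorial : ℝ)⁻¹ * ((N:ℝ)*T/n)^d * ((N:ℝ) * H)
          * iteratedDerivWithin d y (Set.Icc t₀ (t₀ + (N:ℝ) * T / n)) t₀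
        + ∑ j ∈ Finset.Icc 1 N, ρ j * p.eval ((j:ℝ)/N) * R j := by
    have expand : ∀ j ∈ Finset.Icc 1 N,
        ρ j * p.eval ((j:ℝ)/N) * y (t₀ + (j:ℝ) * T / n)
        = (∑ k ∈ Finset.range (d+1),
            (k.factorial : ℝ)⁻¹ * ((N:ℝ)*T/n)^k
              * iteratedDerivWithin k y (Set.Icc t₀ (t₀ + (N:ℝ) * T / n)) t₀
              * (ρ j * p.eval ((j:ℝ)/N) * ((j:ℝ)/N)^k))
          + ρ j * p.eval ((j:ℝ)/N) * R j := by
      intro j hj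
      have hy_eq : y (t₀ + (j:ℝ)*T/n)
          = taylorWithinEval y d (Set.Icc t₀ (t₀ + (N:ℝ) * T / n)) t₀ (t₀ + (j:ℝ)*T/n) + R j := by
        simp [hRdef]
      rw [hy_eq, taylor_within_apply, mul_add]
      congr 1
      rw [Finset.mul_sum]
      refine Finset.sum_congr rfl fun k _ => ?_
      have hjn : (t₀ + (j:ℝ)*T/n) - t₀ = ((j:ℝ)/N) * ((N:ℝ)*T/n) := by
        field_simp
        ring
      rw [smul_eq_mul, hjn, mul_pow]
      ring
    rw [Finset.sum_congr rfl expand, Finset.sum_add_distrib]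
    congr 1
    rw [Finset.sum_comm]
    have h0 : ∀ k ∈ Finset.range (d+1), k ≠ d →
        ∑ j ∈ Finset.Icc 1 N,
          (k.factorial : ℝ)⁻¹ * ((N:ℝ)*T/n)^k
            * iteratedDerivWithin k y (Set.Icc t₀ (t₀ + (N:ℝ) * T / n)) t₀
            * (ρ j * p.eval ((j:ℝ)/N) * ((j:ℝ)/N)^k) = 0 := by
      intro k hk hkd
      have hkd' : k < d := lt_of_le_of_ne (Nat.lt_succ_iff.mp (Finset.mem_range.mp hk)) hkd
      rw [← Finset.mul_sum, hS0 k hkd', mul_zero]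
    rw [Finset.sum_eq_single_of_mem d (Finset.self_mem_range_succ d) h0, ← Finset.mul_sum, hSd]
    ring
  -- the coefficient is exactly 1
  have hcoef : C * ((d.factorial : ℝ)⁻¹ * ((N:ℝ)*T/n)^d * ((N:ℝ) * H)) = 1 := by
    rw [hC]
    field_simp
    rw [div_pow, mul_pow]
    field_simp
    ring
  have hmain : (∫ ω, xhat ω ∂μ)
        - iteratedDerivWithin d y (Set.Icc t₀ (t₀ + (N:ℝ) * T / n)) t₀
      = C * ∑ j ∈ Finset.Icc 1 N, ρ j * p.eval ((j:ℝ)/N) * R j := by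
    rw [hEx, hsum, mul_add, ← mul_assoc, hcoef, one_mul]
    ring
  rw [hmain, abs_mul]
  -- bound the remainder sum
  have hGsum : ∑ j ∈ Finset.Icc 1 N, ρ j * |p.eval ((j:ℝ)/N)| = (N:ℝ) * G := by
    rw [hG]
    field_simp
  have habsE : |∑ j ∈ Finset.Icc 1 N, ρ j * p.eval ((j:ℝ)/N) * R j|
      ≤ ((N:ℝ) * G) * (M * ((N:ℝ)*T/n)^(d+1) / (d+1).factorial) := by
    calc |∑ j ∈ Finset.Icc 1 N, ρ j * p.eval ((j:ℝ)/N) * R j|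
        ≤ ∑ j ∈ Finset.Icc 1 N, |ρ j * p.eval ((j:ℝ)/N) * R j| :=
          Finset.abs_sum_le_sum_abs _ _
      _ ≤ ∑ j ∈ Finset.Icc 1 N,
            (ρ j * |p.eval ((j:ℝ)/N)|) * (M * ((N:ℝ)*T/n)^(d+1) / (d+1).factorial) := by
          refine Finset.sum_le_sum fun j hj => ?_
          rw [abs_mul, abs_mul, abs_of_pos (hρ j hj)]
          exact mul_le_mul_of_nonneg_left (hB j hj)
            (mul_nonneg (hρ j hj).le (abs_nonneg _))
      _ = ((N:ℝ) * G) * (M * ((N:ℝ)*T/n)^(d+1) / (d+1).factorial) := by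
          rw [← Finset.sum_mul, hGsum]
  have hCabs : |C| = (d.factorial : ℝ) * n ^ d / ((N:ℝ) ^ (d + 1) * T ^ d * |H|) := by
    rw [hC, abs_div, abs_mul, abs_mul, abs_mul,
      abs_of_pos (show (0:ℝ) < (d.factorial:ℝ) from by exact_mod_cast d.factorial_pos),
      abs_of_pos (pow_pos hnR d), abs_of_pos (pow_pos hNR _), abs_of_pos (pow_pos hT _)]
  calc |C| * |∑ j ∈ Finset.Icc 1 N, ρ j * p.eval ((j:ℝ)/N) * R j|
      ≤ |C| * (((N:ℝ) * G) * (M * ((N:ℝ)*T/n)^(d+1) / (d+1).factorial)) :=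
        mul_le_mul_of_nonneg_left habsE (abs_nonneg C)
    _ = (M * T / (d + 1)) * ((N : ℝ) / n) * (G / |H|) := by
        rw [hCabs]
        have h2 : (((d+1).factorial : ℝ)) = ((d:ℝ)+1) * d.factorial := by
          push_cast [Nat.factorial_succ]
          ring
        rw [h2]
        have hHabs : |H| ≠ 0 := abs_ne_zero.mpr hHne
        have hd1 : ((d:ℝ)+1) ≠ 0 := by positivity
        field_simp
        rw [div_pow, mul_pow]
        field_simp
        ring
end

section
/- Let N, n be positive integers with N ≤ n, let d be a natural number with d + 1 ≤ N, let T > 0 and t₀ ∈ ℝ with 0 ≤ t₀ and t₀ + NT/n ≤ T. In the filter setting, suppose y : ℝ → ℝ is (d+1)-times differentiable on [t₀, t₀ + NT/n] with |y^{(d+1)}(t)| ≤ M there, and z_j = y(t₀ + jT/n) + w_j where w_1, …, w_N are independent square-integrable real random variables with E w_j = 0. Set s² = (1/N) Σ_{j=1}^N ρ_j² p(j/N)² Var(w_j). Then the derivative estimator x̂ = C Σ_{j=1}^N ρ_j p(j/N) z_j with C = d! n^d / (N^{d+1} T^d h) satisfies the mean-squared-error bound E (x̂ − y^{(d)}(t₀))²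 ≤ A · N²/n² + B · n^{2d}/N^{2d+1}, where A = (M T/(d+1))² (g/h)² and B = (d! · s / (T^d h))². -/
open MeasureTheory ProbabilityTheory Real Finset

theorem iterDW_congr_set {f : ℝ → ℝ} {s t : Set ℝ} {x : ℝ} (h : s =ᶠ[nhds x] t) (n : ℕ) :
    iteratedDerivWithin n f s x = iteratedDerivWithin n f t x := by
  simp only [iteratedDerivWithin_eq_iteratedFDerivWithin, iteratedFDerivWithin_congr_set h n]

theorem aux_var (d : ℕ) (nn NN T H s fa B : ℝ) (hT : T ≠ 0) (hH : H ≠ 0)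
    (hN : (0:ℝ) < NN) (hn : (0:ℝ) < nn)
    (hB : B = (fa * s / (T ^ d * H)) ^ 2) :
    (fa * nn ^ d / (NN ^ (d + 1) * T ^ d * H)) ^ 2 * (NN * s ^ 2)
      = B * nn ^ (2 * d) / NN ^ (2 * d + 1) := by
  rw [hB]
  field_simp
  ring


/-- Mean squared error of the estimated derivative (Theorem: mse-d-i). -/
theorem mse_of_estimated_derivative
    {Ω : Type*} [MeasurableSpace Ω] (μ : Measure Ω) [IsProbabilityMeasure μ]
    (N n : ℕ) (hN : 0 < N) (hNn : N ≤ n)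
    (d : ℕ) (hd : d + 1 ≤ N)
    (T : ℝ) (hT : 0 < T) (t₀ : ℝ) (ht₀ : 0 ≤ t₀) (ht₁ : t₀ + N * T / n ≤ T)
    -- filter setting
    (ρ : ℕ → ℝ) (hρ : ∀ j ∈ Finset.Icc 1 N, 0 < ρ j)
    (p : Polynomial ℝ) (hp : p.degree = d)
    (horth : ∀ k < d,
      (1 / N : ℝ) * ∑ j ∈ Finset.Icc 1 N,
        ρ j * p.eval ((j : ℝ) / N) * ((j : ℝ) / N) ^ k = 0)
    (H G : ℝ)
    (hH : H = (1 / N : ℝ) * ∑ j ∈ Finset.Icc 1 N,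
        ρ j * p.eval ((j : ℝ) / N) * ((j : ℝ) / N) ^ d)
    (hHne : H ≠ 0)
    (hG : G = (1 / N : ℝ) * ∑ j ∈ Finset.Icc 1 N, ρ j * |p.eval ((j : ℝ) / N)|)
    -- regularity of y on the window
    (y : ℝ → ℝ) (M : ℝ)
    (hy : ∀ k ≤ d, ∀ t ∈ Set.Icc t₀ (t₀ + N * T / n),
      DifferentiableWithinAt ℝ
        (iteratedDerivWithin k y (Set.Icc t₀ (t₀ + N * T / n)))
        (Set.Icc t₀ (t₀ + N * T / n)) t)
    (hM : ∀ t ∈ Set.Icc t₀ (t₀ + N * T / n),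
      |iteratedDerivWithin (d + 1) y (Set.Icc t₀ (t₀ + N * T / n)) t| ≤ M)
    -- observations: signal plus independent centered square-integrable noise
    (w : ℕ → Ω → ℝ)
    (hwindep : iIndepFun
      (fun j : Fin N => w (j.1 + 1)) μ)
    (hwL2 : ∀ j ∈ Finset.Icc 1 N, MemLp (w j) 2 μ)
    (hwmean : ∀ j ∈ Finset.Icc 1 N, ∫ ω, w j ω ∂μ = 0)
    (z : ℕ → Ω → ℝ)
    (hz : ∀ j ∈ Finset.Icc 1 N, z j = fun ω => y (t₀ + j * T / n) + w j ω)
    -- the filter variance constant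
    (s : ℝ) (hs : 0 ≤ s)
    (hs2 : s ^ 2 = (1 / N : ℝ) * ∑ j ∈ Finset.Icc 1 N,
        (ρ j) ^ 2 * (p.eval ((j : ℝ) / N)) ^ 2 * variance (w j) μ)
    -- the estimator
    (C : ℝ) (hC : C = (d.factorial : ℝ) * n ^ d / (N ^ (d + 1) * T ^ d * H))
    (xhat : Ω → ℝ)
    (hxhat : xhat = fun ω => C * ∑ j ∈ Finset.Icc 1 N, ρ j * p.eval ((j : ℝ) / N) * z j ω)
    -- the constants in the bound
    (A B : ℝ)
    (hA : A = (M * T / (d + 1)) ^ 2 * (G / H) ^ 2)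
    (hB : B = ((d.factorial : ℝ) * s / (T ^ d * H)) ^ 2) :
    ∫ ω, (xhat ω - iteratedDerivWithin d y (Set.Icc t₀ (t₀ + N * T / n)) t₀) ^ 2 ∂μ
      ≤ A * (N : ℝ) ^ 2 / (n : ℝ) ^ 2
        + B * (n : ℝ) ^ (2 * d) / (N : ℝ) ^ (2 * d + 1) := by
  have hn : 0 < n := lt_of_lt_of_le hN hNn
  have hNR : (0:ℝ) < N := by exact_mod_cast hN
  have hnR : (0:ℝ) < n := by exact_mod_cast hn
  set S : Set ℝ := Set.Icc t₀ (t₀ + N * T / n) with hS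
  set θ : ℕ → ℝ := fun k => iteratedDerivWithin k y S t₀ with hθ
  have hθfold : iteratedDerivWithin d y S t₀ = θ d := rfl
  rw [hθfold]
  set a : ℕ → ℝ := fun j => ρ j * p.eval ((j : ℝ) / N) with ha
  have hδN : (0:ℝ) < N * T / n := by positivity
  have ht₀S : t₀ ∈ S := by constructor <;> [exact le_refl t₀; linarith]
  have hMnn : 0 ≤ M := le_trans (abs_nonneg _) (hM t₀ ht₀S)
  have hGnn : 0 ≤ G := by
    rw [hG]
    apply mul_nonneg (by positivity)
    exact Finset.sum_nonneg fun j hj => mul_nonneg (hρ j hj).le (abs_nonneg _)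
  -- Taylor remainder bound
  have hR : ∀ j ∈ Finset.Icc 1 N,
      |y (t₀ + j * T / n) - ∑ k ∈ Finset.range (d+1), ((j * T / n : ℝ) ^ k / k.factorial) * θ k|
        ≤ M * (N * T / n) ^ (d+1) / (d+1).factorial := by
    intro j hj
    rw [Finset.mem_Icc] at hj
    have hj1 : (1:ℝ) ≤ j := by exact_mod_cast hj.1
    have hjN : (j:ℝ) ≤ N := by exact_mod_cast hj.2
    set x := t₀ + j * T / n with hx
    have hδj : (0:ℝ) < j * T / n := by positivity
    have hxgt : t₀ < x := by rw [hx]; linarith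
    have hxle : x ≤ t₀ + N * T / n := by
      rw [hx]
      have : (j:ℝ) * T / n ≤ N * T / n := by gcongr
      linarith
    have hsub : Set.Icc t₀ x ⊆ S := Set.Icc_subset_Icc_right hxle
    have hsetEq : ∀ u ∈ Set.Ico t₀ x, Set.Icc t₀ x =ᶠ[nhds u] S := by
      intro u hu
      rw [Filter.eventuallyEq_set]
      filter_upwards [Iio_mem_nhds hu.2] with v hv
      simp only [Set.mem_Icc, hS]
      rw [Set.mem_Iio] at hv
      constructor
      · rintro ⟨h1, h2⟩; exact ⟨h1, le_trans h2 hxle⟩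
      · rintro ⟨h1, _⟩; exact ⟨h1, hv.le⟩
    have hCD : ContDiffOn ℝ d y S := by
      apply contDiffOn_of_differentiableOn_deriv
      intro m hm t ht
      exact hy m (by exact_mod_cast hm) t ht
    have h1 : ContDiffOn ℝ d y (Set.Icc t₀ x) := hCD.mono hsub
    have h2 : DifferentiableOn ℝ (iteratedDerivWithin d y (Set.Icc t₀ x)) (Set.Ioo t₀ x) := by
      intro u hu
      have h3 : DifferentiableWithinAt ℝ (iteratedDerivWithin d y S) (Set.Ioo t₀ x) u :=
        (hy d le_rfl u (hsub ⟨hu.1.le, hu.2.le⟩)).mono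
          (subset_trans Set.Ioo_subset_Icc_self hsub)
      apply h3.congr
      · intro v hv; exact iterDW_congr_set (hsetEq v ⟨hv.1.le, hv.2⟩) d
      · exact iterDW_congr_set (hsetEq u ⟨hu.1.le, hu.2⟩) d
    obtain ⟨x', hx', hEq⟩ : ∃ x' ∈ Set.Ioo t₀ x, y x - taylorWithinEval y d (Set.Icc t₀ x) t₀ x =
        iteratedDerivWithin (d + 1) y (Set.Icc t₀ x) x' * (x - t₀) ^ (d + 1) / (d + 1).factorial := by
      have := taylor_mean_remainder_lagrange hxgt.ne
        (by rw [Set.uIcc_of_le hxgt.le]; exact h1)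
        (by rw [Set.uIcc_of_le hxgt.le, Set.uIoo_of_le hxgt.le]; exact h2)
      rwa [Set.uIcc_of_le hxgt.le, Set.uIoo_of_le hxgt.le] at this
    have htay : taylorWithinEval y d (Set.Icc t₀ x) t₀ x
        = ∑ k ∈ Finset.range (d+1), ((j * T / n : ℝ) ^ k / k.factorial) * θ k := by
      rw [taylor_within_apply]
      apply Finset.sum_congr rfl
      intro k _
      rw [iterDW_congr_set (hsetEq t₀ ⟨le_refl t₀, hxgt⟩) k]
      have : x - t₀ = (j:ℝ) * T / n := by rw [hx]; ring
      rw [this, smul_eq_mul]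
      simp only [hθ]
      ring
    rw [← htay, hEq]
    have hbig : iteratedDerivWithin (d+1) y (Set.Icc t₀ x) x'
        = iteratedDerivWithin (d+1) y S x' :=
      iterDW_congr_set (hsetEq x' ⟨hx'.1.le, hx'.2⟩) (d+1)
    have hMx : |iteratedDerivWithin (d+1) y S x'| ≤ M :=
      hM x' (hsub (Set.Ioo_subset_Icc_self hx'))
    have hxt : x - t₀ = (j:ℝ) * T / n := by rw [hx]; ring
    rw [hbig, abs_div, abs_mul, hxt, abs_of_pos (by positivity : (0:ℝ) < ((j:ℝ)*T/n)^(d+1)),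
      abs_of_pos (by positivity : (0:ℝ) < ((d+1).factorial : ℝ))]
    have hjle : (j:ℝ) * T / n ≤ (N:ℝ) * T / n := by gcongr
    have hpow : ((j:ℝ)*T/n)^(d+1) ≤ ((N:ℝ)*T/n)^(d+1) := pow_le_pow_left₀ hδj.le hjle (d+1)
    have hnum : |iteratedDerivWithin (d+1) y S x'| * ((j:ℝ)*T/n)^(d+1)
        ≤ M * ((N:ℝ)*T/n)^(d+1) := mul_le_mul hMx hpow (by positivity) hMnn
    gcongr
  -- Bias identity
  have hbias_id : C * ∑ j ∈ Finset.Icc 1 N, a j * y (t₀ + j * T / n) - θ d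
      = C * ∑ j ∈ Finset.Icc 1 N, a j *
        (y (t₀ + j * T / n) - ∑ k ∈ Finset.range (d+1), ((j * T / n : ℝ) ^ k / k.factorial) * θ k) := by
    have keylt : ∀ k < d, ∑ j ∈ Finset.Icc 1 N, a j * ((j:ℝ)/N)^k = 0 := by
      intro k hk
      have h0 := horth k hk
      have h1 : (1/(N:ℝ)) ≠ 0 := by positivity
      simp only [ha]
      rw [mul_eq_zero] at h0
      rcases h0 with h0 | h0
      · exact absurd h0 h1
      · rw [← h0]
    have keyd : ∑ j ∈ Finset.Icc 1 N, a j * ((j:ℝ)/N)^d = N * H := by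
      simp only [ha]
      rw [hH]
      field_simp
    have keyS : ∀ k, ∑ j ∈ Finset.Icc 1 N, a j * (((j:ℝ)*T/n)^k / k.factorial * θ k)
        = (θ k / k.factorial) * (((N:ℝ)*T/n)^k * ∑ j ∈ Finset.Icc 1 N, a j * ((j:ℝ)/N)^k) := by
      intro k
      rw [Finset.mul_sum, Finset.mul_sum]
      apply Finset.sum_congr rfl
      intro j hj
      have hjq : ((j:ℝ)*T/n) = ((j:ℝ)/N) * ((N:ℝ)*T/n) := by field_simp
      rw [hjq, mul_pow]
      ring
    have hP : ∑ j ∈ Finset.Icc 1 N,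
        a j * (∑ k ∈ Finset.range (d+1), ((j * T / n : ℝ) ^ k / k.factorial) * θ k)
        = (θ d / d.factorial) * (((N:ℝ)*T/n)^d * ((N:ℝ) * H)) := by
      have : ∀ j, a j * (∑ k ∈ Finset.range (d+1), ((j * T / n : ℝ) ^ k / k.factorial) * θ k)
          = ∑ k ∈ Finset.range (d+1), a j * (((j:ℝ)*T/n)^k / k.factorial * θ k) := by
        intro j
        rw [Finset.mul_sum]
      simp only [this]
      rw [Finset.sum_comm]
      rw [Finset.sum_eq_single_of_mem d (Finset.self_mem_range_succ d)]
      · rw [keyS, keyd]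
      · intro k hk hkd
        rw [keyS, keylt k (lt_of_le_of_ne (Nat.lt_succ_iff.mp (Finset.mem_range.mp hk)) hkd)]
        ring
    have hsplit : ∑ j ∈ Finset.Icc 1 N, a j * y (t₀ + j * T / n)
        = (∑ j ∈ Finset.Icc 1 N,
            a j * (∑ k ∈ Finset.range (d+1), ((j * T / n : ℝ) ^ k / k.factorial) * θ k))
          + ∑ j ∈ Finset.Icc 1 N, a j *
            (y (t₀ + j * T / n) - ∑ k ∈ Finset.range (d+1), ((j * T / n : ℝ) ^ k / k.factorial) * θ k) := by
      rw [← Finset.sum_add_distrib]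
      apply Finset.sum_congr rfl
      intro j _
      ring
    rw [hsplit, mul_add, hP, hC]
    have hfac : (d.factorial : ℝ) ≠ 0 := by positivity
    have hTd : T ^ d ≠ 0 := by positivity
    have hNd : (N:ℝ) ^ (d+1) ≠ 0 := by positivity
    have hnd : (n:ℝ) ^ d ≠ 0 := by positivity
    have hn0 : (n:ℝ) ≠ 0 := hnR.ne'
    field_simp
    have hinv : ((n:ℝ) * (n:ℝ)⁻¹) ^ d = 1 := by rw [mul_inv_cancel₀ hn0, one_pow]
    linear_combination (H * θ d * N * (N:ℝ)^d * T^d) * hinv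
  -- Bias bound
  have hbias : (C * ∑ j ∈ Finset.Icc 1 N, a j * y (t₀ + j * T / n) - θ d) ^ 2
      ≤ A * (N : ℝ) ^ 2 / (n : ℝ) ^ 2 := by
    rw [hbias_id]
    set K : ℝ := M * (N * T / n) ^ (d+1) / (d+1).factorial with hKdef
    have hK : (0:ℝ) ≤ K := by rw [hKdef]; positivity
    have hNG : ∑ j ∈ Finset.Icc 1 N, ρ j * |p.eval ((j : ℝ) / N)| = (N:ℝ) * G := by
      rw [hG]; field_simp
    have h1 : |∑ j ∈ Finset.Icc 1 N, a j *
        (y (t₀ + j * T / n) - ∑ k ∈ Finset.range (d+1), ((j * T / n : ℝ) ^ k / k.factorial) * θ k)|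
        ≤ ((N:ℝ) * G) * K := by
      calc |∑ j ∈ Finset.Icc 1 N, a j *
          (y (t₀ + j * T / n) - ∑ k ∈ Finset.range (d+1), ((j * T / n : ℝ) ^ k / k.factorial) * θ k)|
          ≤ ∑ j ∈ Finset.Icc 1 N, |a j *
            (y (t₀ + j * T / n) - ∑ k ∈ Finset.range (d+1), ((j * T / n : ℝ) ^ k / k.factorial) * θ k)| :=
          Finset.abs_sum_le_sum_abs _ _
        _ ≤ ∑ j ∈ Finset.Icc 1 N, (ρ j * |p.eval ((j : ℝ) / N)|) * K := by
          apply Finset.sum_le_sum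
          intro j hj
          rw [abs_mul]
          have haj : |a j| = ρ j * |p.eval ((j : ℝ) / N)| := by
            simp only [ha, abs_mul, abs_of_pos (hρ j hj)]
          rw [haj]
          exact mul_le_mul_of_nonneg_left (hR j hj)
            (mul_nonneg (hρ j hj).le (abs_nonneg _))
        _ = ((N:ℝ) * G) * K := by rw [← Finset.sum_mul, hNG]
    have h2 : |C * ∑ j ∈ Finset.Icc 1 N, a j *
        (y (t₀ + j * T / n) - ∑ k ∈ Finset.range (d+1), ((j * T / n : ℝ) ^ k / k.factorial) * θ k)|
        ≤ |C| * (((N:ℝ) * G) * K) := by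
      rw [abs_mul]
      exact mul_le_mul_of_nonneg_left h1 (abs_nonneg C)
    calc (C * ∑ j ∈ Finset.Icc 1 N, a j *
          (y (t₀ + j * T / n) - ∑ k ∈ Finset.range (d+1), ((j * T / n : ℝ) ^ k / k.factorial) * θ k)) ^ 2
        = |C * ∑ j ∈ Finset.Icc 1 N, a j *
          (y (t₀ + j * T / n) - ∑ k ∈ Finset.range (d+1), ((j * T / n : ℝ) ^ k / k.factorial) * θ k)| ^ 2 :=
        (sq_abs _).symm
      _ ≤ (|C| * (((N:ℝ) * G) * K)) ^ 2 := by
        apply pow_le_pow_left₀ (abs_nonneg _) h2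
      _ = C ^ 2 * (((N:ℝ) * G) * K) ^ 2 := by rw [mul_pow, sq_abs]
      _ = A * (N : ℝ) ^ 2 / (n : ℝ) ^ 2 := by
        have hfs : (((d+1).factorial : ℕ) : ℝ) = ((d:ℝ)+1) * (d.factorial : ℝ) := by
          rw [Nat.factorial_succ]; push_cast; ring
        have hfac : (d.factorial : ℝ) ≠ 0 := by positivity
        have hd1 : ((d:ℝ)+1) ≠ 0 := by positivity
        have hn0 : (n:ℝ) ≠ 0 := hnR.ne'
        rw [hKdef, hA, hC, hfs]
        field_simp
        have hinv : ((n:ℝ) * (n:ℝ)⁻¹) ^ (2 + d * 2) = 1 := by rw [mul_inv_cancel₀ hn0, one_pow]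
        linear_combination (G ^ 2 * M ^ 2 * (N:ℝ) ^ 2 * (N:ℝ) ^ (d * 2) * T ^ 2 * T ^ (d * 2)) * hinv
  -- the noise part
  set W : ℕ → Ω → ℝ := fun j ω => a j * w j ω with hW
  have hWL2 : ∀ j ∈ Finset.Icc 1 N, MemLp (W j) 2 μ := fun j hj => (hwL2 j hj).const_mul _
  have hVL2 : MemLp (∑ j ∈ Finset.Icc 1 N, W j) 2 μ := memLp_finset_sum' _ hWL2
  have hWint : ∀ j ∈ Finset.Icc 1 N, Integrable (W j) μ :=
    fun j hj => (hWL2 j hj).integrable one_le_two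
  have hVmean : ∫ ω, (∑ j ∈ Finset.Icc 1 N, W j) ω ∂μ = 0 := by
    simp only [Finset.sum_apply]
    rw [integral_finset_sum _ hWint]
    apply Finset.sum_eq_zero
    intro j hj
    simp only [hW]
    rw [integral_const_mul, hwmean j hj, mul_zero]
  have hpair : Set.Pairwise ↑(Finset.Icc 1 N) (fun i j => IndepFun (W i) (W j) μ) := by
    intro i hi j hj hij
    simp only [Finset.coe_Icc, Set.mem_Icc] at hi hj
    have h := hwindep.indepFun
      (show (⟨i - 1, by omega⟩ : Fin N) ≠ ⟨j - 1, by omega⟩ by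
        simp only [ne_eq, Fin.mk.injEq]; omega)
    have hi' : i - 1 + 1 = i := by omega
    have hj' : j - 1 + 1 = j := by omega
    rw [hi', hj'] at h
    exact h.comp (measurable_const_mul (a i)) (measurable_const_mul (a j))
  have hVvar : variance (∑ j ∈ Finset.Icc 1 N, W j) μ = N * s ^ 2 := by
    rw [IndepFun.variance_sum hWL2 hpair]
    have : ∀ j ∈ Finset.Icc 1 N, variance (W j) μ = (a j) ^ 2 * variance (w j) μ := by
      intro j hj
      have : W j = a j • w j := rfl
      rw [this, variance_smul]
    rw [Finset.sum_congr rfl this]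
    simp only [ha, mul_pow]
    rw [hs2]
    field_simp
  have hV2 : ∫ ω, ((∑ j ∈ Finset.Icc 1 N, W j) ω) ^ 2 ∂μ = N * s ^ 2 := by
    have h := variance_eq_sub hVL2
    rw [hVvar, hVmean] at h
    simp only [Pi.pow_apply] at h
    linarith
  -- assemble
  set V : Ω → ℝ := ∑ j ∈ Finset.Icc 1 N, W j with hV
  set e : ℝ := C * ∑ j ∈ Finset.Icc 1 N, a j * y (t₀ + j * T / n) - θ d with he
  have hxhat' : ∀ ω, xhat ω - θ d = e + C * V ω := by
    intro ω
    simp only [hxhat]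
    have : ∑ j ∈ Finset.Icc 1 N, ρ j * p.eval ((j : ℝ) / N) * z j ω
        = (∑ j ∈ Finset.Icc 1 N, a j * y (t₀ + j * T / n)) + V ω := by
      rw [hV]
      simp only [Finset.sum_apply]
      rw [← Finset.sum_add_distrib]
      apply Finset.sum_congr rfl
      intro j hj
      rw [hz j hj]
      simp only [ha, hW]
      ring
    rw [this, he]
    ring
  have hVint : Integrable V μ := hVL2.integrable one_le_two
  have hV2int : Integrable (fun ω => (V ω) ^ 2) μ := hVL2.integrable_sq
  have hsplit2 : (fun ω => (xhat ω - θ d) ^ 2)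
      = fun ω => e ^ 2 + ((2 * e * C) * V ω + C ^ 2 * (V ω) ^ 2) := by
    funext ω
    rw [hxhat' ω]
    ring
  have hfinal : ∫ ω, (xhat ω - θ d) ^ 2 ∂μ = e ^ 2 + C ^ 2 * ((N:ℝ) * s ^ 2) := by
    have h1 : ∫ ω, (e ^ 2 + ((2 * e * C) * V ω + C ^ 2 * (V ω) ^ 2)) ∂μ
        = (∫ _ω, (e ^ 2 : ℝ) ∂μ) + ∫ ω, ((2 * e * C) * V ω + C ^ 2 * (V ω) ^ 2) ∂μ :=
      integral_add (integrable_const _)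
        ((hVint.const_mul (2 * e * C)).add (hV2int.const_mul (C ^ 2)))
    have h2 : ∫ ω, ((2 * e * C) * V ω + C ^ 2 * (V ω) ^ 2) ∂μ
        = (∫ ω, (2 * e * C) * V ω ∂μ) + ∫ ω, C ^ 2 * (V ω) ^ 2 ∂μ :=
      integral_add (hVint.const_mul (2 * e * C)) (hV2int.const_mul (C ^ 2))
    rw [hsplit2, h1, h2, integral_const, integral_const_mul, integral_const_mul, hVmean, hV2]
    simp only [probReal_univ, measure_univ, ENNReal.toReal_one, one_smul, mul_zero, zero_add]
  have hvarbound : C ^ 2 * ((N:ℝ) * s ^ 2) = B * (n : ℝ) ^ (2 * d) / (N : ℝ) ^ (2 * d + 1) := by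
    rw [hC]
    exact aux_var d n N T H s _ B hT.ne' hHne hNR hnR hB
  calc ∫ ω, (xhat ω - θ d) ^ 2 ∂μ = e ^ 2 + C ^ 2 * ((N:ℝ) * s ^ 2) := hfinal
    _ ≤ A * (N : ℝ) ^ 2 / (n : ℝ) ^ 2 + B * (n : ℝ) ^ (2 * d) / (N : ℝ) ^ (2 * d + 1) := by
      rw [hvarbound]
      exact add_le_add_left hbias _
end
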